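/- arXiv:2504.05109 — 8 statements merged into one kernel-verified Lean document; each statement's English description precedes it below -/
import Mathlib

section
/- Let A ∈ ℝ^{m×n}, b ∈ ℝ^m, c ∈ ℝ^n, and let x̂ ∈ ℝ^n with A x̂ = b, x̂ ≥ 0. Let I = {i : x̂_i > 0} and Ī = {i : x̂_i = 0}. Suppose (δ*, y*, s*, ε*) satisfies: (1) a_i^T y* + ε*_i / x̂_i = c_i for i ∈ I; (2) a_i^T y* + s*_i = c_i with s*_i ≥ 0 for i ∈ Ī; (3) A δ* = 0; (4) δ*_i ≤ x̂_i for all i; (5) δ*_i s*_i = 0 for i ∈ Ī; (6) ε*_i (x̂_i - δ*_i) = 0 for i ∈ I; with ε* ≥ 0. Define x^{LP} = x̂ - δ*, y^{LP} = y*, s^{LP}_i = ε*_i / x̂_i for i ∈ I, s^{LP}_i = s*_i for i ∈ Ī. Then x^{LP} is primal feasible (A x^{LP} = b, x^{LP} ≥ 0), (y^{LP}, s^{LP}) is dual feasible (A^T y^{LP} + s^{LP} = c, s^{LP} ≥ 0), and complementary slackness holds: x^{LP}_i s^{LP}_i = 0 for all i. Hence x^{LP} is optimal for min{c^T x : Ax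 = b, x ≥ 0} and (y^{LP}, s^{LP}) is optimal for the dual. -/
open Matrix

/-- Theorem 2: from a solution of the KKT-type system (op1)-(op6) one recovers a
primal-dual optimal pair of the LP relaxation. -/
theorem stmt_1 (m n : ℕ) (A : Matrix (Fin m) (Fin n) ℝ) (b : Fin m → ℝ) (c : Fin n → ℝ)
    (xhat : Fin n → ℝ) (hfeas : A.mulVec xhat = b) (hnn : ∀ i, 0 ≤ xhat i)
    (δ : Fin n → ℝ) (y : Fin m → ℝ) (s ε : Fin n → ℝ)
    (hop1 : ∀ i, 0 < xhat i → Aᵀ.mulVec y i + ε i / xhat i = c i)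
    (hop2 : ∀ i, xhat i = 0 → Aᵀ.mulVec y i + s i = c i ∧ 0 ≤ s i)
    (hop3 : A.mulVec δ = 0)
    (hop4 : ∀ i, δ i ≤ xhat i)
    (hop5 : ∀ i, xhat i = 0 → δ i * s i = 0)
    (hop6 : ∀ i, 0 < xhat i → ε i * (xhat i - δ i) = 0)
    (hε : ∀ i, 0 ≤ ε i)
    (xLP : Fin n → ℝ) (hxLP : xLP = xhat - δ)
    (yLP : Fin m → ℝ) (hyLP : yLP = y)
    (sLP : Fin n → ℝ) (hsLP : ∀ i, sLP i = if 0 < xhat i then ε i / xhat i else s i) :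
    -- primal feasibility
    (A.mulVec xLP = b ∧ ∀ i, 0 ≤ xLP i) ∧
    -- dual feasibility
    ((∀ i, Aᵀ.mulVec yLP i + sLP i = c i) ∧ ∀ i, 0 ≤ sLP i) ∧
    -- complementary slackness
    (∀ i, xLP i * sLP i = 0) ∧
    -- primal optimality
    (∀ x : Fin n → ℝ, A.mulVec x = b → (∀ i, 0 ≤ x i) →
      dotProduct c xLP ≤ dotProduct c x) ∧
    -- dual optimality
    (∀ (y' : Fin m → ℝ) (s' : Fin n → ℝ),
      (∀ i, Aᵀ.mulVec y' i + s' i = c i) → (∀ i, 0 ≤ s' i) →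
      dotProduct b y' ≤ dotProduct b yLP) := by
  subst hxLP hyLP
  -- primal feasibility
  have hpf : A.mulVec (xhat - δ) = b := by
    rw [Matrix.mulVec_sub, hfeas, hop3, sub_zero]
  have hpn : ∀ i, 0 ≤ (xhat - δ) i := fun i => by
    have := hop4 i; simp only [Pi.sub_apply, sub_nonneg]; linarith
  -- dual feasibility
  have hdf : ∀ i, Aᵀ.mulVec yLP i + sLP i = c i := fun i => by
    rw [hsLP i]
    by_cases h : 0 < xhat i
    · rw [if_pos h]; exact hop1 i h
    · have h0 : xhat i = 0 := le_antisymm (not_lt.1 h) (hnn i)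
      rw [if_neg h]; exact (hop2 i h0).1
  have hdn : ∀ i, 0 ≤ sLP i := fun i => by
    rw [hsLP i]
    by_cases h : 0 < xhat i
    · rw [if_pos h]; exact div_nonneg (hε i) (le_of_lt h)
    · have h0 : xhat i = 0 := le_antisymm (not_lt.1 h) (hnn i)
      rw [if_neg h]; exact (hop2 i h0).2
  -- complementary slackness
  have hcs : ∀ i, (xhat - δ) i * sLP i = 0 := fun i => by
    rw [hsLP i]
    by_cases h : 0 < xhat i
    · rw [if_pos h]
      have h6 := hop6 i h
      have hne : xhat i ≠ 0 := ne_of_gt h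
      field_simp
      simp only [Pi.sub_apply]
      linarith
    · have h0 : xhat i = 0 := le_antisymm (not_lt.1 h) (hnn i)
      have h5 := hop5 i h0
      rw [if_neg h]
      simp only [Pi.sub_apply, h0, zero_sub, neg_mul]
      linarith
  -- key identity
  have key : ∀ (x : Fin n → ℝ) (y0 : Fin m → ℝ) (t : Fin n → ℝ),
      A.mulVec x = b → (∀ i, Aᵀ.mulVec y0 i + t i = c i) →
      dotProduct c x = dotProduct b y0 + dotProduct t x := by
    intro x y0 t hx hc
    have h1 : dotProduct c x = dotProduct (Aᵀ.mulVec y0) x + dotProduct t x := by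
      simp only [dotProduct]
      rw [← Finset.sum_add_distrib]
      apply Finset.sum_congr rfl
      intro i _
      rw [← hc i]; ring
    rw [h1, Matrix.mulVec_transpose, ← Matrix.dotProduct_mulVec, hx, dotProduct_comm]
  have hcs0 : dotProduct sLP (xhat - δ) = 0 := by
    simp only [dotProduct]
    apply Finset.sum_eq_zero
    intro i _
    rw [mul_comm]; exact hcs i
  have hval : dotProduct c (xhat - δ) = dotProduct b yLP := by
    rw [key (xhat - δ) yLP sLP hpf hdf, hcs0, add_zero]
  refine ⟨⟨hpf, hpn⟩, ⟨hdf, hdn⟩, hcs, ?_, ?_⟩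
  · intro x hx hxn
    rw [hval, key x yLP sLP hx hdf]
    have : 0 ≤ dotProduct sLP x := by
      apply Finset.sum_nonneg
      intro i _
      exact mul_nonneg (hdn i) (hxn i)
    linarith
  · intro y' s' hd' hs'
    have hk := key (xhat - δ) y' s' hpf hd'
    have hnn' : 0 ≤ dotProduct s' (xhat - δ) := by
      apply Finset.sum_nonneg
      intro i _
      exact mul_nonneg (hs' i) (hpn i)
    rw [hval] at hk
    linarith
end

section
/- Let A ∈ ℝ^{m×n}, b ∈ ℝ^m, and let x̂ > 0 satisfy A x̂ = b. Suppose (ŷ, ε̂) solves the system A^T ŷ + X̂^{-1} ε̂ = c̊ with ε̂ ≥ 0, where X̂ = diag(x̂). For any σ ∈ ℝ^n with 0 < σ_i < ε̂_i / x̂_i for all i, set c = c̊ - σ. Then there exists a dual feasible pair for the LP min{c^T x : Ax = b, x ≥ 0} (namely ŷ together with slack ŝ - σ where ŝ = X̂^{-1} ε̂), and x̂ is within Σ_{i=1}^n (ε̂_i - σ_i x̂_i) of the optimal value of min{c^T x : Ax = b, x ≥ 0}. -/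
open Matrix

/-- Trade-off result: perturbing the reference cost c̊ by σ gives a cost c = c̊ - σ
for which (ŷ, ŝ - σ) is dual feasible and x̂ is Σ_i (ε̂_i - σ_i x̂_i)-optimal. -/
theorem stmt_5 (m n : ℕ) (A : Matrix (Fin m) (Fin n) ℝ) (b : Fin m → ℝ) (cring : Fin n → ℝ)
    (xhat : Fin n → ℝ) (hpos : ∀ i, 0 < xhat i) (hfeas : A.mulVec xhat = b)
    (yhat : Fin m → ℝ) (εhat : Fin n → ℝ)
    (hsys : ∀ i, Aᵀ.mulVec yhat i + εhat i / xhat i = cring i)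
    (hεhat : ∀ i, 0 ≤ εhat i)
    (σ : Fin n → ℝ) (hσ : ∀ i, 0 < σ i ∧ σ i < εhat i / xhat i)
    (shat : Fin n → ℝ) (hshat : ∀ i, shat i = εhat i / xhat i)
    (c : Fin n → ℝ) (hc : c = cring - σ) :
    -- (ŷ, ŝ - σ) is dual feasible for min { c^T x : Ax = b, x ≥ 0 }
    ((∀ i, Aᵀ.mulVec yhat i + (shat i - σ i) = c i) ∧ ∀ i, 0 ≤ shat i - σ i) ∧
    -- x̂ is within Σ_i (ε̂_i - σ_i x̂_i) of the optimal value
    (∀ x : Fin n → ℝ, A.mulVec x = b → (∀ i, 0 ≤ x i) →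
      dotProduct c xhat - ∑ i, (εhat i - σ i * xhat i) ≤ dotProduct c x) := by
  have hceq : ∀ i, Aᵀ.mulVec yhat i + (shat i - σ i) = c i := by
    intro i
    rw [hshat, hc]
    simp only [Pi.sub_apply]
    linarith [hsys i]
  have hsnn : ∀ i, 0 ≤ shat i - σ i := by
    intro i
    rw [hshat]
    linarith [(hσ i).2]
  refine ⟨⟨hceq, hsnn⟩, ?_⟩
  intro x hAx hxnn
  -- decompose c ⬝ᵥ v as yhat ⬝ᵥ A v + Σ (shat - σ) v
  have key : ∀ v : Fin n → ℝ,
      dotProduct c v = yhat ⬝ᵥ A.mulVec v + ∑ i, (shat i - σ i) * v i := by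
    intro v
    have : dotProduct c v = ∑ i, (Aᵀ.mulVec yhat i + (shat i - σ i)) * v i := by
      unfold dotProduct
      exact Finset.sum_congr rfl fun i _ => by rw [hceq i]
    rw [this]
    have h2 : yhat ⬝ᵥ A.mulVec v = Aᵀ.mulVec yhat ⬝ᵥ v := by
      rw [Matrix.dotProduct_mulVec, ← Matrix.vecMul_transpose]; rw [Matrix.transpose_transpose]
    rw [h2]
    unfold dotProduct
    rw [← Finset.sum_add_distrib]
    exact Finset.sum_congr rfl fun i _ => by ring
  have hx := key x
  have hxh := key xhat
  rw [hAx] at hx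
  rw [hfeas] at hxh
  have h1 : ∑ i, (shat i - σ i) * xhat i = ∑ i, (εhat i - σ i * xhat i) := by
    refine Finset.sum_congr rfl fun i _ => ?_
    rw [hshat]
    field_simp [(hpos i).ne']
  have h2 : 0 ≤ ∑ i, (shat i - σ i) * x i :=
    Finset.sum_nonneg fun i _ => mul_nonneg (hsnn i) (hxnn i)
  rw [hxh, h1] at *
  linarith [hx, h2]
end

section
/- Let A ∈ ℝ^{m×n}, let x̂ ∈ ℝ^n and σ̂ ∈ ℝ^m satisfy x̂ > 0 and σ̂ > 0 componentwise (so (x̂, σ̂) is strictly interior for Ax + σ = b, x, σ ≥ 0). Then the optimal objective value of [IOP2(x̂, σ̂)]: minimize Σ_{i=1}^n ε_i + Σ_{i=1}^m ε^σ_i subject to a_i^T y + ε_i/x̂_i = c_i for i = 1,...,n; y_i + ε^σ_i/σ̂_i = 0 for i = 1,...,m; ‖c‖₁ = 1; ε ≥ 0, ε^σ ≥ 0; equals min{ min_{1≤i≤n} x̂_i , min_{1≤i≤m} σ̂_i / ‖a_i‖₁ }, where a_i in the second minimum denotes the i-th row of A. -/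
open Matrix

/-- Proposition 4(a): for a strictly interior point (x̂, σ̂), the optimal value of
[IOP2(x̂, σ̂)] equals min{ min_i x̂_i, min_i σ̂_i/‖a_i‖₁ }. -/
theorem stmt_8 (m n : ℕ) (hn : 0 < n) (hm : 0 < m)
    (A : Matrix (Fin m) (Fin n) ℝ) (hrows : ∀ i, ∑ j, |A i j| ≠ 0)
    (xhat : Fin n → ℝ) (hx : ∀ j, 0 < xhat j)
    (σhat : Fin m → ℝ) (hσ : ∀ i, 0 < σhat i) :
    IsLeast
      {v : ℝ | ∃ (y : Fin m → ℝ) (c ε : Fin n → ℝ) (εσ : Fin m → ℝ),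
        (∀ j, Aᵀ.mulVec y j + ε j / xhat j = c j) ∧
        (∀ i, y i + εσ i / σhat i = 0) ∧
        (∑ j, |c j| = 1) ∧
        (∀ j, 0 ≤ ε j) ∧ (∀ i, 0 ≤ εσ i) ∧
        v = ∑ j, ε j + ∑ i, εσ i}
      (min (⨅ j : Fin n, xhat j) (⨅ i : Fin m, σhat i / ∑ j, |A i j|)) := by
  haveI : Nonempty (Fin n) := ⟨⟨0, hn⟩⟩
  haveI : Nonempty (Fin m) := ⟨⟨0, hm⟩⟩
  have hSpos : ∀ i, 0 < ∑ j, |A i j| := fun i =>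
    lt_of_le_of_ne (Finset.sum_nonneg fun j _ => abs_nonneg _) (Ne.symm (hrows i))
  obtain ⟨j0, hj0⟩ := Finite.exists_min xhat
  obtain ⟨i0, hi0⟩ := Finite.exists_min (fun i => σhat i / ∑ j, |A i j|)
  have hbx : BddBelow (Set.range xhat) := Finite.bddBelow_range _
  have hbs : BddBelow (Set.range fun i => σhat i / ∑ j, |A i j|) := Finite.bddBelow_range _
  have hX : (⨅ j, xhat j) = xhat j0 := le_antisymm (ciInf_le hbx j0) (le_ciInf hj0)
  have hSm : (⨅ i, σhat i / ∑ j, |A i j|) = σhat i0 / ∑ j, |A i0 j| :=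
    le_antisymm (ciInf_le hbs i0) (le_ciInf hi0)
  constructor
  · -- membership
    rcases le_total (xhat j0) (σhat i0 / ∑ j, |A i0 j|) with h | h
    · refine ⟨0, fun j => if j = j0 then 1 else 0, fun j => if j = j0 then xhat j0 else 0, 0,
        ?_, ?_, ?_, ?_, ?_, ?_⟩
      · intro j
        simp only [Matrix.mulVec_zero, Pi.zero_apply, zero_add]
        by_cases hj : j = j0 <;> simp [hj, div_self (hx j0).ne', zero_div]
      · intro i; simp
      · simp [apply_ite abs, Finset.sum_ite_eq']
      · intro j; by_cases hj : j = j0 <;> simp [hj, (hx j0).le]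
      · intro i; simp
      · rw [hX, hSm, min_eq_left h]
        simp [Finset.sum_ite_eq']
    · refine ⟨fun i => if i = i0 then -1 / ∑ j, |A i0 j| else 0,
        fun j => -(A i0 j) / ∑ j, |A i0 j|, 0,
        fun i => if i = i0 then σhat i0 / ∑ j, |A i0 j| else 0,
        ?_, ?_, ?_, ?_, ?_, ?_⟩
      · intro j
        simp only [Matrix.mulVec, dotProduct, transpose_apply, Pi.zero_apply, zero_div,
          add_zero, mul_ite, mul_zero, Finset.sum_ite_eq', Finset.mem_univ, if_true]
        ring
      · intro i
        by_cases hi : i = i0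
        · subst hi
          simp only [eq_self_iff_true, if_true, ite_true]
          rw [div_div, mul_comm, ← div_div, div_self (hσ i).ne']
          ring
        · simp [hi]
      · have habs : ∀ j, abs (-(A i0 j) / ∑ k, |A i0 k|) = |A i0 j| / ∑ k, |A i0 k| := by
          intro j
          rw [abs_div, abs_neg, abs_of_pos (hSpos i0)]
        simp_rw [habs, ← Finset.sum_div]
        exact div_self (hrows i0)
      · intro j; simp
      · intro i
        by_cases hi : i = i0 <;>
          simp [hi, le_div_iff₀ (hSpos i0), (hσ i0).le]
      · rw [hX, hSm, min_eq_right h]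
        simp [Finset.sum_ite_eq']
  · -- lower bound
    rintro v ⟨y, c, ε, εσ, hc, hy, hc1, hε, hεσ, rfl⟩
    set V := min (⨅ j, xhat j) (⨅ i, σhat i / ∑ j, |A i j|) with hV
    have hVx : ∀ j, V ≤ xhat j := fun j =>
      le_trans (min_le_left _ _) (hX ▸ hj0 j)
    have hVs : ∀ i, V ≤ σhat i / ∑ j, |A i j| := fun i =>
      le_trans (min_le_right _ _) (hSm ▸ hi0 i)
    have hVpos : 0 < V := lt_min (hX ▸ hx j0) (hSm ▸ div_pos (hσ i0) (hSpos i0))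
    have hyabs : ∀ i, |y i| = εσ i / σhat i := by
      intro i
      have := hy i
      have : y i = -(εσ i / σhat i) := by linarith
      rw [this, abs_neg, abs_of_nonneg (div_nonneg (hεσ i) (hσ i).le)]
    have key : (1:ℝ) ≤ (∑ j, ε j / V) + ∑ i, εσ i / V := by
      calc (1:ℝ) = ∑ j, |c j| := hc1.symm
        _ ≤ ∑ j, ((∑ i, |A i j| * |y i|) + ε j / xhat j) := by
            refine Finset.sum_le_sum fun j _ => ?_
            rw [← hc j]
            refine le_trans (abs_add_le _ _) (add_le_add ?_ ?_)
            · rw [Matrix.mulVec, dotProduct]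
              refine le_trans (Finset.abs_sum_le_sum_abs _ _) ?_
              refine Finset.sum_le_sum fun i _ => ?_
              rw [abs_mul, transpose_apply]
            · rw [abs_of_nonneg (div_nonneg (hε j) (hx j).le)]
        _ = (∑ i, (εσ i / σhat i) * ∑ j, |A i j|) + ∑ j, ε j / xhat j := by
            rw [Finset.sum_add_distrib, Finset.sum_comm]
            congr 1
            refine Finset.sum_congr rfl fun i _ => ?_
            rw [← hyabs i, Finset.mul_sum]
            refine Finset.sum_congr rfl fun j _ => ?_
            ring
        _ ≤ (∑ i, εσ i / V) + ∑ j, ε j / V := by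
            refine add_le_add (Finset.sum_le_sum fun i _ => ?_)
              (Finset.sum_le_sum fun j _ => ?_)
            · have h1 : (∑ j, |A i j|) / σhat i ≤ 1 / V := by
                rw [div_le_div_iff₀ (hσ i) hVpos]
                have h2 := hVs i
                rw [le_div_iff₀ (hSpos i)] at h2
                linarith
              calc εσ i / σhat i * ∑ j, |A i j| = εσ i * ((∑ j, |A i j|) / σhat i) := by
                    ring
                _ ≤ εσ i * (1 / V) := mul_le_mul_of_nonneg_left h1 (hεσ i)
                _ = εσ i / V := by ring
            · gcongr
              · exact hε j
              · exact hVx j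
        _ = (∑ j, ε j / V) + ∑ i, εσ i / V := by ring
    have : (1:ℝ) ≤ (∑ j, ε j + ∑ i, εσ i) / V := by
      rw [add_div, Finset.sum_div, Finset.sum_div]
      exact key
    exact (one_le_div hVpos).mp this
end

section
/- Under the hypotheses of Proposition 4 (x̂ > 0, σ̂ > 0, all rows a_i of A nonzero), if min_{1≤i≤n} x̂_i ≥ min_{1≤i≤m} σ̂_i/‖a_i‖₁ and p attains min_{1≤i≤m} σ̂_i/‖a_i‖₁, then y* = -e_p/‖a_p‖₁, c* = -a_p/‖a_p‖₁, ε* = 0, ε^{σ*}_p = σ̂_p/‖a_p‖₁, ε^{σ*}_i = 0 for i ≠ p is feasible for [IOP2(x̂, σ̂)] with objective value σ̂_p/‖a_p‖₁, and no feasible solution has a strictly smaller objective. -/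
open Matrix

/-- Proposition 4(b): when the slack-based bound dominates, the closed-form solution
y* = -e_p/‖a_p‖₁, c* = -a_p/‖a_p‖₁, ε* = 0, ε^σ*_p = σ̂_p/‖a_p‖₁ (0 elsewhere)
is feasible for [IOP2(x̂, σ̂)] with objective σ̂_p/‖a_p‖₁, and no feasible solution
does strictly better. -/
theorem stmt_9 (m n : ℕ) (A : Matrix (Fin m) (Fin n) ℝ) (hrows : ∀ i, ∑ j, |A i j| ≠ 0)
    (xhat : Fin n → ℝ) (hx : ∀ j, 0 < xhat j)
    (σhat : Fin m → ℝ) (hσ : ∀ i, 0 < σhat i)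
    (p : Fin m)
    (hpmin : ∀ i, σhat p / ∑ j, |A p j| ≤ σhat i / ∑ j, |A i j|)
    (hcase : ∀ j, σhat p / ∑ j', |A p j'| ≤ xhat j)
    (ystar : Fin m → ℝ) (hy : ystar = fun i => if i = p then -(1 / ∑ j, |A p j|) else 0)
    (cstar : Fin n → ℝ) (hc : cstar = fun j => -(A p j) / ∑ j', |A p j'|)
    (εstar : Fin n → ℝ) (hε : εstar = 0)
    (εσstar : Fin m → ℝ)
    (hεσ : εσstar = fun i => if i = p then σhat p / ∑ j, |A p j| else 0) :
    -- feasibility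
    ((∀ j, Aᵀ.mulVec ystar j + εstar j / xhat j = cstar j) ∧
     (∀ i, ystar i + εσstar i / σhat i = 0) ∧
     (∑ j, |cstar j| = 1) ∧
     (∀ j, 0 ≤ εstar j) ∧ (∀ i, 0 ≤ εσstar i)) ∧
    -- objective value
    (∑ j, εstar j + ∑ i, εσstar i = σhat p / ∑ j, |A p j|) ∧
    -- no feasible solution has a strictly smaller objective
    (∀ (y : Fin m → ℝ) (c ε : Fin n → ℝ) (εσ : Fin m → ℝ),
      (∀ j, Aᵀ.mulVec y j + ε j / xhat j = c j) →
      (∀ i, y i + εσ i / σhat i = 0) →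
      (∑ j, |c j| = 1) →
      (∀ j, 0 ≤ ε j) → (∀ i, 0 ≤ εσ i) →
      σhat p / ∑ j, |A p j| ≤ ∑ j, ε j + ∑ i, εσ i) := by
  have hSpos : ∀ i : Fin m, 0 < ∑ j, |A i j| := fun i =>
    lt_of_le_of_ne (Finset.sum_nonneg fun j _ => abs_nonneg _) (Ne.symm (hrows i))
  have hSp : 0 < ∑ j, |A p j| := hSpos p
  subst hy hc hε hεσ
  refine ⟨⟨?_, ?_, ?_, ?_, ?_⟩, ?_, ?_⟩
  · intro j
    simp [Matrix.mulVec, dotProduct, Matrix.transpose_apply, mul_ite, mul_zero]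
    ring
  · intro i
    by_cases h : i = p
    · subst h
      simp only [if_pos rfl]
      field_simp
      simp only [↓reduceIte]; rw [div_div, mul_comm (∑ j, |A i j|), ← div_div, div_self (hσ i).ne']
      ring
    · simp [h]
  · have : ∀ j, |(-(A p j) / ∑ j', |A p j'|)| = |A p j| / ∑ j', |A p j'| := by
      intro j
      rw [abs_div, abs_neg, abs_of_pos hSp]
    simp only [this, ← Finset.sum_div]
    field_simp
  · intro j; simp
  · intro i
    by_cases h : i = p
    · subst h; simp; exact (div_pos (hσ _) hSp).le
    · simp [h]
  · simp
  · intro y c ε εσ h1 h2 h3 hεnn hεσnn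
    have hy' : ∀ i, y i = -(εσ i / σhat i) := fun i => by linarith [h2 i]
    set R : ℝ := (∑ j, |A p j|) / σhat p with hR
    have hRpos : 0 < R := div_pos hSp (hσ p)
    have key : (1:ℝ) ≤ R * (∑ j, ε j + ∑ i, εσ i) := by
      have step1 : (1:ℝ) ≤ ∑ j, ((∑ i, |A i j| * (εσ i / σhat i)) + ε j / xhat j) := by
        rw [← h3]
        apply Finset.sum_le_sum
        intro j _
        have hcj : c j = (∑ i, A i j * y i) + ε j / xhat j := by
          rw [← h1 j]; simp [Matrix.mulVec, dotProduct, Matrix.transpose_apply]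
        rw [hcj]
        have hb : 0 ≤ ε j / xhat j := div_nonneg (hεnn j) (hx j).le
        calc |(∑ i, A i j * y i) + ε j / xhat j|
            ≤ |∑ i, A i j * y i| + |ε j / xhat j| := abs_add_le _ _
          _ ≤ (∑ i, |A i j * y i|) + ε j / xhat j := by
              rw [abs_of_nonneg hb]
              exact add_le_add_left (Finset.abs_sum_le_sum_abs _ _) _
          _ = (∑ i, |A i j| * (εσ i / σhat i)) + ε j / xhat j := by
              congr 1
              apply Finset.sum_congr rfl
              intro i _
              rw [abs_mul, hy' i, abs_neg, abs_of_nonneg (div_nonneg (hεσnn i) (hσ i).le)]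
      have step2 : ∑ j, ((∑ i, |A i j| * (εσ i / σhat i)) + ε j / xhat j)
          = (∑ i, (εσ i / σhat i) * ∑ j, |A i j|) + ∑ j, ε j / xhat j := by
        rw [Finset.sum_add_distrib]
        congr 1
        rw [Finset.sum_comm]
        apply Finset.sum_congr rfl
        intro i _
        rw [Finset.mul_sum]
        apply Finset.sum_congr rfl
        intro j _
        ring
      have step3 : (∑ i, (εσ i / σhat i) * ∑ j, |A i j|) + ∑ j, ε j / xhat j
          ≤ (∑ i, R * εσ i) + ∑ j, R * ε j := by
        apply add_le_add
        · apply Finset.sum_le_sum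
          intro i _
          have hratio : (∑ j, |A i j|) / σhat i ≤ R := by
            rw [hR, div_le_div_iff₀ (hσ i) (hσ p)]
            have := hpmin i
            rw [div_le_div_iff₀ hSp (hSpos i)] at this
            linarith
          have : (εσ i / σhat i) * ∑ j, |A i j| = εσ i * ((∑ j, |A i j|) / σhat i) := by
            ring
          rw [this]
          calc εσ i * ((∑ j, |A i j|) / σhat i) ≤ εσ i * R :=
                mul_le_mul_of_nonneg_left hratio (hεσnn i)
            _ = R * εσ i := mul_comm _ _
        · apply Finset.sum_le_sum
          intro j _
          have hxj : σhat p / ∑ j', |A p j'| ≤ xhat j := hcase j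
          have h1x : 1 / xhat j ≤ R := by
            rw [hR]
            rw [div_le_div_iff₀ (hx j) (hσ p)]
            have h0 : 0 < σhat p / ∑ j', |A p j'| := div_pos (hσ p) hSp
            calc 1 * σhat p = σhat p := one_mul _
              _ = (σhat p / ∑ j', |A p j'|) * ∑ j', |A p j'| := by field_simp
              _ ≤ xhat j * ∑ j', |A p j'| := by
                  exact mul_le_mul_of_nonneg_right hxj hSp.le
              _ = (∑ j', |A p j'|) * xhat j := mul_comm _ _
          calc ε j / xhat j = ε j * (1 / xhat j) := by ring
            _ ≤ ε j * R := mul_le_mul_of_nonneg_left h1x (hεnn j)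
            _ = R * ε j := mul_comm _ _
      calc (1:ℝ) ≤ _ := step1
        _ = _ := step2
        _ ≤ (∑ i, R * εσ i) + ∑ j, R * ε j := step3
        _ = R * (∑ j, ε j + ∑ i, εσ i) := by
            rw [← Finset.mul_sum, ← Finset.mul_sum]; ring
    have : σhat p / ∑ j, |A p j| = 1 / R := by
      rw [hR]; field_simp
    rw [this, div_le_iff₀ hRpos]
    linarith [key]
end

section
/- Under the hypotheses of Proposition 4 (x̂ > 0, σ̂ > 0), if min_{1≤i≤n} x̂_i ≤ min_{1≤i≤m} σ̂_i/‖a_i‖₁ and p attains min_{1≤i≤n} x̂_i, then y* = 0, c* = e_p, ε*_p = x̂_p, ε*_i = 0 for i ≠ p, ε^{σ*} = 0 is feasible for [IOP2(x̂, σ̂)] with objective value x̂_p, and no feasible solution has a strictly smaller objective. -/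
open Matrix

/-- Proposition 4(c): when the primal-variable bound dominates, the closed-form
solution y* = 0, c* = e_p, ε*_p = x̂_p (0 elsewhere), ε^σ* = 0 is feasible for
[IOP2(x̂, σ̂)] with objective x̂_p, and no feasible solution does strictly better. -/
theorem stmt_10 (m n : ℕ) (A : Matrix (Fin m) (Fin n) ℝ) (hrows : ∀ i, ∑ j, |A i j| ≠ 0)
    (xhat : Fin n → ℝ) (hx : ∀ j, 0 < xhat j)
    (σhat : Fin m → ℝ) (hσ : ∀ i, 0 < σhat i)
    (p : Fin n)
    (hpmin : ∀ j, xhat p ≤ xhat j)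
    (hcase : ∀ i, xhat p ≤ σhat i / ∑ j, |A i j|)
    (ystar : Fin m → ℝ) (hy : ystar = 0)
    (cstar : Fin n → ℝ) (hc : cstar = fun j => if j = p then 1 else 0)
    (εstar : Fin n → ℝ) (hε : εstar = fun j => if j = p then xhat p else 0)
    (εσstar : Fin m → ℝ) (hεσ : εσstar = 0) :
    -- feasibility
    ((∀ j, Aᵀ.mulVec ystar j + εstar j / xhat j = cstar j) ∧
     (∀ i, ystar i + εσstar i / σhat i = 0) ∧
     (∑ j, |cstar j| = 1) ∧
     (∀ j, 0 ≤ εstar j) ∧ (∀ i, 0 ≤ εσstar i)) ∧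
    -- objective value
    (∑ j, εstar j + ∑ i, εσstar i = xhat p) ∧
    -- no feasible solution has a strictly smaller objective
    (∀ (y : Fin m → ℝ) (c ε : Fin n → ℝ) (εσ : Fin m → ℝ),
      (∀ j, Aᵀ.mulVec y j + ε j / xhat j = c j) →
      (∀ i, y i + εσ i / σhat i = 0) →
      (∑ j, |c j| = 1) →
      (∀ j, 0 ≤ ε j) → (∀ i, 0 ≤ εσ i) →
      xhat p ≤ ∑ j, ε j + ∑ i, εσ i) := by
  subst hy hc hε hεσ
  refine ⟨⟨?_, ?_, ?_, ?_, ?_⟩, ?_, ?_⟩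
  · intro j
    simp only [Matrix.mulVec_zero, Pi.zero_apply, zero_add]
    by_cases h : j = p <;> simp [h, div_self (hx p).ne']
  · intro i; simp
  · have : ∀ j : Fin n, |if j = p then (1:ℝ) else 0| = if j = p then 1 else 0 := by
      intro j; by_cases h : j = p <;> simp [h]
    simp only [this, Finset.sum_ite_eq', Finset.mem_univ, if_true]
  · intro j; by_cases h : j = p <;> simp [h, (hx p).le]
  · intro i; simp
  · simp [Finset.sum_ite_eq']
  · intro y c ε εσ h1 h2 h3 hε0 hεσ0
    have hS : ∀ i, (0:ℝ) < ∑ j, |A i j| := fun i =>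
      lt_of_le_of_ne (Finset.sum_nonneg fun j _ => abs_nonneg _) (Ne.symm (hrows i))
    have hyabs : ∀ i, |y i| = εσ i / σhat i := by
      intro i
      have h := h2 i
      have hyi : y i = -(εσ i / σhat i) := by linarith
      rw [hyi, abs_neg, abs_of_nonneg (div_nonneg (hεσ0 i) (hσ i).le)]
    have step1 : ∀ j, xhat p * |c j| ≤ xhat p * |Aᵀ.mulVec y j| + ε j := by
      intro j
      have hcj : |c j| ≤ |Aᵀ.mulVec y j| + ε j / xhat j := by
        rw [← h1 j]
        refine (abs_add_le _ _).trans ?_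
        rw [abs_of_nonneg (div_nonneg (hε0 j) (hx j).le)]
      have h2' : xhat p * (ε j / xhat j) ≤ ε j := by
        have h3' : ε j / xhat j * xhat p ≤ ε j / xhat j * xhat j :=
          mul_le_mul_of_nonneg_left (hpmin j) (div_nonneg (hε0 j) (hx j).le)
        rwa [div_mul_cancel₀ _ (hx j).ne', mul_comm] at h3'
      calc xhat p * |c j| ≤ xhat p * (|Aᵀ.mulVec y j| + ε j / xhat j) :=
            mul_le_mul_of_nonneg_left hcj (hx p).le
        _ = xhat p * |Aᵀ.mulVec y j| + xhat p * (ε j / xhat j) := by ring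
        _ ≤ _ := by linarith
    have step2 : ∑ j, xhat p * |Aᵀ.mulVec y j| ≤ ∑ i, εσ i := by
      have hb : ∀ j, xhat p * |Aᵀ.mulVec y j| ≤ ∑ i, xhat p * (|A i j| * |y i|) := by
        intro j
        rw [← Finset.mul_sum]
        refine mul_le_mul_of_nonneg_left ?_ (hx p).le
        calc |Aᵀ.mulVec y j| = |∑ i, A i j * y i| := by
              simp [Matrix.mulVec, Matrix.transpose_apply, dotProduct]
          _ ≤ ∑ i, |A i j * y i| := Finset.abs_sum_le_sum_abs _ _
          _ = ∑ i, |A i j| * |y i| := by simp [abs_mul]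
      calc ∑ j, xhat p * |Aᵀ.mulVec y j| ≤ ∑ j, ∑ i, xhat p * (|A i j| * |y i|) :=
            Finset.sum_le_sum fun j _ => hb j
        _ = ∑ i, xhat p * (∑ j, |A i j|) * |y i| := by
            rw [Finset.sum_comm]
            refine Finset.sum_congr rfl fun i _ => ?_
            simp only [Finset.mul_sum, Finset.sum_mul]
            exact Finset.sum_congr rfl fun j _ => by ring
        _ ≤ ∑ i, εσ i := by
            refine Finset.sum_le_sum fun i _ => ?_
            rw [hyabs i]
            have hle : xhat p * (∑ j, |A i j|) ≤ σhat i := (le_div_iff₀ (hS i)).mp (hcase i)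
            have := mul_le_mul_of_nonneg_right hle (div_nonneg (hεσ0 i) (hσ i).le)
            calc xhat p * (∑ j, |A i j|) * (εσ i / σhat i) ≤ σhat i * (εσ i / σhat i) := this
              _ = εσ i := by rw [mul_comm, div_mul_cancel₀ _ (hσ i).ne']
    have final : xhat p * 1 ≤ ∑ j, ε j + ∑ i, εσ i := by
      calc xhat p * 1 = xhat p * ∑ j, |c j| := by rw [h3]
        _ = ∑ j, xhat p * |c j| := Finset.mul_sum _ _ _
        _ ≤ ∑ j, (xhat p * |Aᵀ.mulVec y j| + ε j) := Finset.sum_le_sum fun j _ => step1 j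
        _ = ∑ j, xhat p * |Aᵀ.mulVec y j| + ∑ j, ε j := Finset.sum_add_distrib
        _ ≤ ∑ j, ε j + ∑ i, εσ i := by linarith
    linarith
end

section
/- Let A ∈ ℝ^{m×n}, x̂ > 0, σ̂ > 0, with all rows of A nonzero, and set γ = min_{1≤i≤m} σ̂_i/‖a_i‖₁. Suppose min_i x̂_i ≥ γ. Then any (y, c, ε, ε^σ) with ε ≥ 0, ε^σ ≥ 0 satisfying (A^T y)_j + ε_j/x̂_j = c_j for all j, y_i + ε^σ_i/σ̂_i = 0 for all i, and ‖c‖₁ = 1, has objective Σ_j ε_j + Σ_i ε^σ_i ≥ γ. -/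
open Matrix

/-- Lower-bound half of Proposition 4(b): with γ = min_i σ̂_i/‖a_i‖₁ and
min_j x̂_j ≥ γ, every feasible solution of [IOP2(x̂, σ̂)] has objective at least γ. -/
theorem stmt_12 (m n : ℕ) (A : Matrix (Fin m) (Fin n) ℝ) (hrows : ∀ i, ∑ j, |A i j| ≠ 0)
    (xhat : Fin n → ℝ) (hx : ∀ j, 0 < xhat j)
    (σhat : Fin m → ℝ) (hσ : ∀ i, 0 < σhat i)
    (γ : ℝ) (hγ : IsLeast {v : ℝ | ∃ i, v = σhat i / ∑ j, |A i j|} γ)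
    (hcase : ∀ j, γ ≤ xhat j)
    (y : Fin m → ℝ) (c ε : Fin n → ℝ) (εσ : Fin m → ℝ)
    (hε : ∀ j, 0 ≤ ε j) (hεσ : ∀ i, 0 ≤ εσ i)
    (h1 : ∀ j, Aᵀ.mulVec y j + ε j / xhat j = c j)
    (h2 : ∀ i, y i + εσ i / σhat i = 0)
    (hnorm : ∑ j, |c j| = 1) :
    γ ≤ ∑ j, ε j + ∑ i, εσ i := by
  set T : Fin n → ℝ := Aᵀ.mulVec y with hT
  -- row sums are positive
  have hS : ∀ i, 0 < ∑ j, |A i j| := fun i =>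
    lt_of_le_of_ne (Finset.sum_nonneg fun j _ => abs_nonneg _) (Ne.symm (hrows i))
  -- γ is positive
  obtain ⟨⟨i0, hi0⟩, hlb⟩ := hγ
  have hγpos : 0 < γ := hi0 ▸ div_pos (hσ i0) (hS i0)
  -- γ * ‖a_i‖₁ ≤ σ̂_i
  have hγS : ∀ i, γ * ∑ j, |A i j| ≤ σhat i := by
    intro i
    have := hlb ⟨i, rfl⟩
    calc γ * ∑ j, |A i j| ≤ (σhat i / ∑ j, |A i j|) * ∑ j, |A i j| := by
          exact mul_le_mul_of_nonneg_right this (le_of_lt (hS i))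
      _ = σhat i := div_mul_cancel₀ _ (hrows i)
  -- εσ i = σhat i * |y i|
  have hεσ' : ∀ i, εσ i = σhat i * |y i| := by
    intro i
    have hy : y i = -(εσ i / σhat i) := by linarith [h2 i]
    have : |y i| = εσ i / σhat i := by
      rw [hy, abs_neg, abs_of_nonneg (div_nonneg (hεσ i) (le_of_lt (hσ i)))]
    rw [this, mul_div_cancel₀ _ (ne_of_gt (hσ i))]
  have hεσge : ∀ i, γ * ((∑ j, |A i j|) * |y i|) ≤ εσ i := by
    intro i
    rw [hεσ' i, ← mul_assoc]
    exact mul_le_mul_of_nonneg_right (hγS i) (abs_nonneg _)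
  -- ε j ≥ γ * |c j - T j|
  have hεge : ∀ j, γ * |c j - T j| ≤ ε j := by
    intro j
    have hεj : ε j = xhat j * (c j - T j) := by
      have h := h1 j
      field_simp [(hx j).ne'] at h
      linear_combination h
    have hd : 0 ≤ c j - T j := by
      by_contra h
      push_neg at h
      nlinarith [hε j, hx j]
    rw [abs_of_nonneg hd, hεj]
    exact mul_le_mul_of_nonneg_right (hcase j) hd
  -- Σ_j |T j| ≤ Σ_i ‖a_i‖₁ |y i|
  have hTle : ∑ j, |T j| ≤ ∑ i, (∑ j, |A i j|) * |y i| := by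
    have : ∀ j, |T j| ≤ ∑ i, |A i j| * |y i| := by
      intro j
      have : T j = ∑ i, A i j * y i := by
        simp [hT, Matrix.mulVec, dotProduct, Matrix.transpose_apply]
      rw [this]
      refine (Finset.abs_sum_le_sum_abs _ _).trans ?_
      simp [abs_mul]
    calc ∑ j, |T j| ≤ ∑ j, ∑ i, |A i j| * |y i| :=
          Finset.sum_le_sum fun j _ => this j
      _ = ∑ i, (∑ j, |A i j|) * |y i| := by
          rw [Finset.sum_comm]
          simp [Finset.sum_mul]
  -- combine
  have key : γ * ∑ j, |c j| ≤ ∑ j, ε j + ∑ i, εσ i := by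
    have h1' : γ * ∑ j, |c j| ≤ γ * (∑ j, |c j - T j| + ∑ j, |T j|) := by
      apply mul_le_mul_of_nonneg_left _ (le_of_lt hγpos)
      rw [← Finset.sum_add_distrib]
      refine Finset.sum_le_sum fun j _ => ?_
      calc |c j| = |(c j - T j) + T j| := by ring_nf
        _ ≤ |c j - T j| + |T j| := abs_add_le _ _
    have h2' : γ * ∑ j, |T j| ≤ γ * ∑ i, (∑ j, |A i j|) * |y i| :=
      mul_le_mul_of_nonneg_left hTle (le_of_lt hγpos)
    have h3' : γ * ∑ j, |c j - T j| ≤ ∑ j, ε j := by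
      rw [Finset.mul_sum]
      exact Finset.sum_le_sum fun j _ => hεge j
    have h4' : γ * ∑ i, (∑ j, |A i j|) * |y i| ≤ ∑ i, εσ i := by
      rw [Finset.mul_sum]
      exact Finset.sum_le_sum fun i _ => hεσge i
    nlinarith [mul_add γ (∑ j, |c j - T j|) (∑ j, |T j|)]
  rw [hnorm] at key
  linarith
end

section
/- Let A ∈ ℝ^{m×n}, x̂ > 0, σ̂ > 0, and let p attain min_{1≤i≤n} x̂_i with x̂_p ≤ min_{1≤i≤m} σ̂_i/‖a_i‖₁. Then every (y, c, ε, ε^σ) with ε, ε^σ ≥ 0 satisfying (A^T y)_j + ε_j/x̂_j = c_j for all j, y_i + ε^σ_i/σ̂_i = 0 for all i, and ‖c‖₁ = 1, has objective Σ_j ε_j + Σ_i ε^σ_i ≥ x̂_p. -/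
open Matrix

/-- Lower-bound half of Proposition 4(c): if p attains min_j x̂_j and
x̂_p ≤ min_i σ̂_i/‖a_i‖₁, every feasible solution of [IOP2(x̂, σ̂)] has objective
at least x̂_p. -/
theorem stmt_13 (m n : ℕ) (A : Matrix (Fin m) (Fin n) ℝ)
    (xhat : Fin n → ℝ) (hx : ∀ j, 0 < xhat j)
    (σhat : Fin m → ℝ) (hσ : ∀ i, 0 < σhat i)
    (p : Fin n) (hpmin : ∀ j, xhat p ≤ xhat j)
    (hcase : ∀ i, xhat p ≤ σhat i / ∑ j, |A i j|)
    (y : Fin m → ℝ) (c ε : Fin n → ℝ) (εσ : Fin m → ℝ)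
    (hε : ∀ j, 0 ≤ ε j) (hεσ : ∀ i, 0 ≤ εσ i)
    (h1 : ∀ j, Aᵀ.mulVec y j + ε j / xhat j = c j)
    (h2 : ∀ i, y i + εσ i / σhat i = 0)
    (hnorm : ∑ j, |c j| = 1) :
    xhat p ≤ ∑ j, ε j + ∑ i, εσ i := by
  have hxp := hx p
  -- ε j = xhat j * (c j - Aᵀ.mulVec y j)
  have hεeq : ∀ j, ε j = xhat j * (c j - Aᵀ.mulVec y j) := by
    intro j
    have h := h1 j
    have hxj := (hx j).ne'
    field_simp at h
    nlinarith [hx j]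
  have hεσeq : ∀ i, εσ i = σhat i * |y i| := by
    intro i
    have h := h2 i
    have hσi := hσ i
    have hy : y i = -(εσ i / σhat i) := by linarith
    have hyle : y i ≤ 0 := by
      rw [hy]; exact neg_nonpos.mpr (div_nonneg (hεσ i) (hσ i).le)
    rw [abs_of_nonpos hyle, hy]
    field_simp
  -- step 1: sum of ε
  have step1 : xhat p * (1 - ∑ j, |Aᵀ.mulVec y j|) ≤ ∑ j, ε j := by
    have key1 : ∀ j, xhat p * (|c j| - |Aᵀ.mulVec y j|) ≤ ε j := by
      intro j
      have hεj := hεeq j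
      have hcpos : 0 ≤ c j - Aᵀ.mulVec y j := by
        nlinarith [hε j, hx j]
      have habs : |c j| - |Aᵀ.mulVec y j| ≤ c j - Aᵀ.mulVec y j := by
        have := abs_sub_abs_le_abs_sub (c j) (Aᵀ.mulVec y j)
        rw [abs_of_nonneg hcpos] at this
        exact this
      rcases le_or_gt (|c j| - |Aᵀ.mulVec y j|) 0 with h | h
      · nlinarith [hε j]
      · nlinarith [hpmin j, hx j]
    calc xhat p * (1 - ∑ j, |Aᵀ.mulVec y j|)
        = ∑ j, xhat p * (|c j| - |Aᵀ.mulVec y j|) := by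
          rw [← Finset.mul_sum, Finset.sum_sub_distrib, hnorm]
      _ ≤ ∑ j, ε j := Finset.sum_le_sum fun j _ => key1 j
  -- step 2: sum of εσ
  have step2 : xhat p * (∑ j, |Aᵀ.mulVec y j|) ≤ ∑ i, εσ i := by
    have key2 : ∀ i, xhat p * ((∑ j, |A i j|) * |y i|) ≤ εσ i := by
      intro i
      rw [hεσeq i]
      have hnn : 0 ≤ ∑ j, |A i j| := Finset.sum_nonneg fun j _ => abs_nonneg _
      rcases hnn.eq_or_lt with h | h
      · rw [← h]
        simpa using mul_nonneg (hσ i).le (abs_nonneg (y i))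
      · have := (le_div_iff₀ h).mp (hcase i)
        nlinarith [abs_nonneg (y i)]
    have hbound : ∑ j, |Aᵀ.mulVec y j| ≤ ∑ i, (∑ j, |A i j|) * |y i| := by
      calc ∑ j, |Aᵀ.mulVec y j|
          ≤ ∑ j, ∑ i, |A i j * y i| := by
            apply Finset.sum_le_sum
            intro j _
            simp only [Matrix.mulVec, dotProduct, Matrix.transpose_apply]
            exact Finset.abs_sum_le_sum_abs _ _
        _ = ∑ i, (∑ j, |A i j|) * |y i| := by
            rw [Finset.sum_comm]
            congr 1
            ext i
            rw [Finset.sum_mul]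
            congr 1; ext j; rw [abs_mul]
    calc xhat p * (∑ j, |Aᵀ.mulVec y j|)
        ≤ xhat p * ∑ i, (∑ j, |A i j|) * |y i| := by
          exact mul_le_mul_of_nonneg_left hbound hxp.le
      _ = ∑ i, xhat p * ((∑ j, |A i j|) * |y i|) := Finset.mul_sum _ _ _
      _ ≤ ∑ i, εσ i := Finset.sum_le_sum fun i _ => key2 i
  nlinarith [step1, step2]
end

section
/- Let A ∈ ℝ^{m×n}, b ∈ ℝ^m, c ∈ ℝ^n, and let x̂ be feasible for the mixed integer program min{c^T x : Ax = b, x ≥ 0, x_j ∈ ℤ for j ∈ J̄}. Suppose (y, ε, s) is feasible for the lower-level LP: (A^T y)_i + ε_i/x̂_i = c_i for i ∈ I = {i : x̂_i > 0}, (A^T y)_i + s_i = c_i with s_i ≥ 0 for i ∈ Ī, ε ≥ 0. Then the optimal value z* of the mixed integer program satisfies c^T x̂ - Σ_{i ∈ I} ε_i ≤ z* ≤ c^T x̂; i.e., x̂ is (Σ_{i ∈ I} ε_i)-optimal for the forward MIP. -/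
open Matrix

/-- ε-optimality certificate for the forward MIP: if x̂ is MIP-feasible and
(y, ε, s) is feasible for the lower-level LP, then the MIP optimal value z*
satisfies c^T x̂ - Σ_{i ∈ I} ε_i ≤ z* ≤ c^T x̂. -/
theorem stmt_18 (m n : ℕ) (A : Matrix (Fin m) (Fin n) ℝ) (b : Fin m → ℝ) (c : Fin n → ℝ)
    (Jbar : Set (Fin n))
    (xhat : Fin n → ℝ)
    (hfeas : A.mulVec xhat = b) (hnn : ∀ i, 0 ≤ xhat i)
    (hint : ∀ j ∈ Jbar, ∃ k : ℤ, xhat j = (k : ℝ))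
    (y : Fin m → ℝ) (ε s : Fin n → ℝ)
    (h1 : ∀ i, 0 < xhat i → Aᵀ.mulVec y i + ε i / xhat i = c i)
    (h2 : ∀ i, xhat i = 0 → Aᵀ.mulVec y i + s i = c i ∧ 0 ≤ s i)
    (hε : ∀ i, 0 ≤ ε i)
    (zstar : ℝ)
    (hz : zstar = sInf {v : ℝ | ∃ x : Fin n → ℝ,
        A.mulVec x = b ∧ (∀ i, 0 ≤ x i) ∧ (∀ j ∈ Jbar, ∃ k : ℤ, x j = (k : ℝ)) ∧
        v = dotProduct c x}) :
    dotProduct c xhat - ∑ i ∈ Finset.univ.filter (fun i => 0 < xhat i), ε i ≤ zstar ∧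
    zstar ≤ dotProduct c xhat := by
  set L := dotProduct c xhat - ∑ i ∈ Finset.univ.filter (fun i => 0 < xhat i), ε i with hL
  -- (Aᵀy)_i ≤ c_i for all i
  have hAle : ∀ i, Aᵀ.mulVec y i ≤ c i := by
    intro i
    rcases (hnn i).lt_or_eq with hp | hp
    · have := h1 i hp
      nlinarith [hε i, div_nonneg (hε i) (hnn i)]
    · have := h2 i hp.symm
      linarith [this.1, this.2]
  -- dotProduct of (Aᵀy) with x̂ equals c·x̂ - Σε
  have hdual : dotProduct (Aᵀ.mulVec y) xhat = L := by
    rw [hL]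
    have : ∀ i : Fin n, Aᵀ.mulVec y i * xhat i
        = c i * xhat i - (if 0 < xhat i then ε i else 0) := by
      intro i
      rcases (hnn i).lt_or_eq with hp | hp
      · have h := h1 i hp
        have : ε i / xhat i * xhat i = ε i := div_mul_cancel₀ _ (ne_of_gt hp)
        simp only [if_pos hp]
        nlinarith
      · simp [← hp, not_lt.mpr (le_of_eq hp)]
    simp only [dotProduct, this, Finset.sum_sub_distrib, Finset.sum_ite, Finset.sum_const_zero, add_zero]
  -- for any feasible x, (Aᵀy)·x = y·b
  have hyb : ∀ x : Fin n → ℝ, A.mulVec x = b → dotProduct (Aᵀ.mulVec y) x = dotProduct y b := by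
    intro x hx
    rw [← hx, Matrix.dotProduct_mulVec, Matrix.mulVec_transpose]
  -- lower bound on any feasible value
  have hlow : ∀ x : Fin n → ℝ, A.mulVec x = b → (∀ i, 0 ≤ x i) → L ≤ dotProduct c x := by
    intro x hx hxnn
    have h1' : dotProduct (Aᵀ.mulVec y) x ≤ dotProduct c x := by
      apply Finset.sum_le_sum
      intro i _
      exact mul_le_mul_of_nonneg_right (hAle i) (hxnn i)
    have := hyb x hx
    have := hyb xhat hfeas
    linarith [hdual]
  have hmem : dotProduct c xhat ∈ {v : ℝ | ∃ x : Fin n → ℝ,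
      A.mulVec x = b ∧ (∀ i, 0 ≤ x i) ∧ (∀ j ∈ Jbar, ∃ k : ℤ, x j = (k : ℝ)) ∧
      v = dotProduct c x} := ⟨xhat, hfeas, hnn, hint, rfl⟩
  have hbdd : BddBelow {v : ℝ | ∃ x : Fin n → ℝ,
      A.mulVec x = b ∧ (∀ i, 0 ≤ x i) ∧ (∀ j ∈ Jbar, ∃ k : ℤ, x j = (k : ℝ)) ∧
      v = dotProduct c x} := by
    refine ⟨L, ?_⟩
    rintro v ⟨x, hx, hxnn, -, rfl⟩
    exact hlow x hx hxnn
  constructor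
  · rw [hz]
    exact le_csInf ⟨_, hmem⟩ (by rintro v ⟨x, hx, hxnn, -, rfl⟩; exact hlow x hx hxnn)
  · rw [hz]
    exact csInf_le hbdd hmem
end
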